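/- arXiv:2511.02733 — 3 statements merged into one kernel-verified Lean document; each statement's English description precedes it below -/
import Mathlib

section
/- Let d be an odd integer with d ≥ 3 and set N = (d-1)/2. For every integer m with 0 ≤ m ≤ N there exists a finite sequence of nonnegative integers (n₁,…,n_s) with s ≤ ⌈log₂ N⌉ + 1 such that m = φ(d; n₁,…,n_s), where φ(d; n₁) = ⌊(d-1)/2^{n₁}⌋ and φ(d; n₁,…,n_{t+1}) = ⌊(d-1-φ(d; n₁,…,n_t))/2^{n_{t+1}}⌋. -/
/-- The function `φ(d; n₁,…,n_t)` of Definition 4.6. -/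
def phi (d : ℕ) (ns : List ℕ) : ℕ :=
  ns.foldl (fun acc n => (d - 1 - acc) / 2 ^ n) 0

/-- Covering lemma: any interval `[u, v]` with `2*u ≤ v ≤ e` contains some `e / 2^j`. -/
lemma cover (e : ℕ) : ∀ k u v, u ≤ v → v ≤ e → 2*u ≤ v → e / 2^k ≤ v →
    ∃ j, u ≤ e/2^j ∧ e/2^j ≤ v := by
  intro k
  induction k with
  | zero =>
    intro u v huv hve h2u h
    refine ⟨0, ?_, ?_⟩ <;> simp only [pow_zero, Nat.div_one] at * <;> omega
  | succ k ih =>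
    intro u v huv hve h2u h
    by_cases h' : e / 2^k ≤ v
    · exact ih u v huv hve h2u h'
    · push_neg at h'
      refine ⟨k+1, ?_, h⟩
      have he : e / 2^(k+1) = (e / 2^k) / 2 := by
        rw [Nat.div_div_eq_div_mul, pow_succ]
      have : 2*u + 1 ≤ e / 2^k := by omega
      have h2 : (2*u+1)/2 ≤ (e / 2^k) / 2 := Nat.div_le_div_right this
      omega

/-- Main induction: backward preimage intervals double until they catch a one-step value. -/
lemma main (N : ℕ) : ∀ t u v, u ≤ v → v ≤ 2*N → u ≤ N → N ≤ 2^t * (v - u + 1) →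
    ∃ b ns, u ≤ b ∧ b ≤ v ∧ ns ≠ ([] : List ℕ) ∧ ns.length ≤ t + 1 ∧
      List.foldl (fun acc n => (2*N - acc)/2^n) 0 ns = b := by
  intro t
  induction t with
  | zero =>
    intro u v huv hv2 huN hgrow
    by_cases h2u : 2*u ≤ v
    · obtain ⟨j, h1, h2⟩ := cover (2*N) (2*N) u v huv hv2 h2u
        (by
          have : 2*N < 2^(2*N) := Nat.lt_two_pow_self
          have : 2*N / 2^(2*N) = 0 := Nat.div_eq_of_lt this
          omega)
      exact ⟨2*N/2^j, [j], h1, h2, by simp, by simp, by simp⟩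
    · push_neg at h2u
      by_cases hNv : N ≤ v
      · refine ⟨N, [1], huN, hNv, by simp, by simp, ?_⟩
        simp
      · -- contradiction: t = 0 forces v - u + 1 ≥ N but u ≥ 1, v < N
        exfalso
        simp only [pow_zero, one_mul] at hgrow
        omega
  | succ s ih =>
    intro u v huv hv2 huN hgrow
    by_cases h2u : 2*u ≤ v
    · obtain ⟨j, h1, h2⟩ := cover (2*N) (2*N) u v huv hv2 h2u
        (by
          have : 2*N < 2^(2*N) := Nat.lt_two_pow_self
          have : 2*N / 2^(2*N) = 0 := Nat.div_eq_of_lt this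
          omega)
      exact ⟨2*N/2^j, [j], h1, h2, by simp, by simp, by simp⟩
    · push_neg at h2u
      by_cases hNv : N ≤ v
      · refine ⟨N, [1], huN, hNv, by simp, by simp, ?_⟩
        simp
      · push_neg at hNv
        -- Case 3: 1 ≤ u, v < N. Pick minimal n with N < 2^n*(v+1).
        have hu1 : 1 ≤ u := by omega
        have hex : ∃ n, N < 2^n*(v+1) := by
          refine ⟨N, ?_⟩
          have h1 : N < 2^N := Nat.lt_two_pow_self
          have h2 : 2^N ≤ 2^N*(v+1) := Nat.le_mul_of_pos_right _ (by omega)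
          omega
        set n := Nat.find hex with hndef
        have hn : N < 2^n*(v+1) := Nat.find_spec hex
        have hn1 : 1 ≤ n := by
          rcases Nat.eq_zero_or_pos n with h | h
          · exfalso; rw [h] at hn; simp at hn; omega
          · exact h
        have hmin : ¬ N < 2^(n-1)*(v+1) := Nat.find_min hex (by omega)
        push_neg at hmin
        have hY2N : 2^n*(v+1) ≤ 2*N := by
          have : 2^n = 2^(n-1) * 2 := by
            rw [← pow_succ]; congr 1; omega
          calc 2^n*(v+1) = 2*(2^(n-1)*(v+1)) := by rw [this]; ring
            _ ≤ 2*N := by omega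
        set P := 2^n with hPdef
        have hP : 0 < P := Nat.pow_pos (by norm_num)
        have hP2 : 2 ≤ P := by
          calc 2 = 2^1 := by norm_num
            _ ≤ 2^n := Nat.pow_le_pow_right (by norm_num) hn1
        -- the new interval
        set u' := 2*N + 1 - P*(v+1) with hu'def
        set v' := 2*N - P*u with hv'def
        have hXY : P*u + P = P*(v+1) - P*(v-u) := by
          have : P*(v+1) = P*u + P + P*(v-u) := by
            have h := Nat.mul_add P u (v+1-u)
            have : v + 1 - u = (v - u) + 1 := by omega
            rw [this] at h
            have h2 : u + (v - u + 1) = v + 1 := by omega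
            rw [h2] at h
            rw [h]; ring
          omega
        have hPuv : P*u + P ≤ P*(v+1) := by omega
        have hZ : P*(v-u+1) = P*(v+1) - P*u := by
          have h := Nat.mul_add P (v-u) 1
          omega
        have hu'v' : u' ≤ v' := by
          simp only [hu'def, hv'def]
          omega
        have hv'2 : v' ≤ 2*N := by omega
        have hu'N : u' ≤ N := by
          simp only [hu'def]; omega
        have hlen' : v' - u' + 1 = P*(v-u+1) := by
          simp only [hu'def, hv'def]; omega
        have hgrow' : N ≤ 2^s * (v' - u' + 1) := by
          rw [hlen']
          have h1 : 2*(v-u+1) ≤ P*(v-u+1) := Nat.mul_le_mul_right _ hP2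
          have h2 : 2^(s+1)*(v-u+1) = 2^s*(2*(v-u+1)) := by ring
          have h3 : 2^s*(2*(v-u+1)) ≤ 2^s*(P*(v-u+1)) := Nat.mul_le_mul_left _ h1
          omega
        obtain ⟨b', ns, hub', hb'v, hne, hlen, hfold⟩ := ih u' v' hu'v' hv'2 hu'N hgrow'
        refine ⟨(2*N - b')/P, ns ++ [n], ?_, ?_, by simp, by simp; omega, ?_⟩
        · -- u ≤ (2N - b')/P  since b' ≤ v' = 2N - P*u
          rw [Nat.le_div_iff_mul_le hP]
          have : b' ≤ 2*N - P*u := hb'v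
          have hPu2N : P*u ≤ 2*N := by omega
          have : u * P = P * u := Nat.mul_comm _ _
          omega
        · -- (2N - b')/P ≤ v  since b' ≥ u' = 2N + 1 - P*(v+1)
          have h1 : (2*N - b')/P < v + 1 := by
            rw [Nat.div_lt_iff_lt_mul hP]
            have : u' ≤ b' := hub'
            have : (v+1) * P = P * (v+1) := Nat.mul_comm _ _
            simp only [hu'def] at *
            omega
          omega
        · rw [List.foldl_append, hfold]; rfl

theorem stmt1 (d : ℕ) (hd : Odd d) (h3 : 3 ≤ d) (m : ℕ) (hm : m ≤ (d - 1) / 2) :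
    ∃ ns : List ℕ, ns ≠ [] ∧ ns.length ≤ Nat.clog 2 ((d - 1) / 2) + 1 ∧ m = phi d ns := by
  set N := (d-1)/2 with hNdef
  have hdN : d - 1 = 2*N := by
    obtain ⟨k, hk⟩ := hd
    simp only [hNdef]
    omega
  have hgrow : N ≤ 2^(Nat.clog 2 N) * (m - m + 1) := by
    have := Nat.le_pow_clog (by norm_num : 1 < 2) N
    simpa using this
  obtain ⟨b, ns, hub, hbv, hne, hlen, hfold⟩ :=
    main N (Nat.clog 2 N) m m le_rfl (by omega) hm hgrow
  have hbm : b = m := by omega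
  refine ⟨ns, hne, hlen, ?_⟩
  rw [phi]
  rw [show (fun acc n => (d - 1 - acc) / 2 ^ n) = (fun acc n => (2*N - acc)/2^n) by
    funext acc n; rw [hdN]]
  omega
end

section
/- Let k be a field and let M be an (n+1)-dimensional k-vector space with basis β, e₁, …, e_n (n ≥ 1). Let V : M → M be the additive semilinear map determined by V(e_i) = e_{i/2} for even i, V(e_1) = β, V(e_i) = 0 for odd i > 1, and V(β) = 0. Then for every integer r with 0 ≤ r ≤ ⌊log₂ n⌋ + 1, V^r(M) is spanned by β, e₁, …, e_{⌊n/2^r⌋} (so has dimension ⌊n/2^r⌋ + 1), and V^r(M) = 0 for r > ⌊log₂ n⌋ + 2. -/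
theorem stmt7 (k : Type*) [Field k] (M : Type*) [AddCommGroup M] [Module k M]
    (n : ℕ) (hn : 1 ≤ n) (σ : k ≃+* k)
    (V : M →ₛₗ[(σ : k →+* k)] M)
    (β : M) (e : ℕ → M)
    (hind : LinearIndependent k (fun i : Fin (n + 1) => if i.val = 0 then β else e i.val))
    (hspan : Submodule.span k (insert β (e '' Set.Icc 1 n)) = ⊤)
    (hVβ : V β = 0) (hV1 : V (e 1) = β)
    (hVeven : ∀ i, 2 ≤ i → i ≤ n → Even i → V (e i) = e (i / 2))
    (hVodd : ∀ i, 2 ≤ i → i ≤ n → Odd i → V (e i) = 0) :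
    (∀ r ≤ Nat.log 2 n + 1,
        Submodule.span k ((⇑V)^[r] '' Set.univ)
          = Submodule.span k (insert β (e '' Set.Icc 1 (n / 2 ^ r))) ∧
        Module.finrank k (Submodule.span k ((⇑V)^[r] '' Set.univ)) = n / 2 ^ r + 1) ∧
    (∀ r, Nat.log 2 n + 2 < r → Submodule.span k ((⇑V)^[r] '' Set.univ) = ⊥) := by
  haveI : RingHomSurjective (σ : k →+* k) := ⟨σ.surjective⟩
  have hiter : ∀ r : ℕ, Submodule.span k ((⇑V)^[r+1] '' Set.univ)
      = Submodule.map V (Submodule.span k ((⇑V)^[r] '' Set.univ)) := by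
    intro r
    rw [Function.iterate_succ', Set.image_comp, ← Submodule.map_span]
  have hstep : ∀ m : ℕ, 1 ≤ m → m ≤ n →
      Submodule.map V (Submodule.span k (insert β (e '' Set.Icc 1 m)))
        = Submodule.span k (insert β (e '' Set.Icc 1 (m / 2))) := by
    intro m hm1 hmn
    rw [Submodule.map_span]
    apply le_antisymm
    · rw [Submodule.span_le]
      rintro x ⟨y, hy, rfl⟩
      rcases hy with rfl | ⟨i, ⟨hi1, him⟩, rfl⟩
      · rw [hVβ]; exact Submodule.zero_mem _
      · rcases Nat.even_or_odd i with he | ho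
        · have hi2 : 2 ≤ i := by rcases he with ⟨t, rfl⟩; omega
          rw [hVeven i hi2 (le_trans him hmn) he]
          exact Submodule.subset_span
            (Or.inr ⟨i / 2, ⟨(Nat.one_le_div_iff (by norm_num)).2 hi2,
              Nat.div_le_div_right him⟩, rfl⟩)
        · rcases Nat.eq_or_lt_of_le hi1 with rfl | hi2
          · rw [hV1]; exact Submodule.subset_span (Or.inl rfl)
          · rw [hVodd i hi2 (le_trans him hmn) ho]; exact Submodule.zero_mem _
    · rw [Submodule.span_le]
      rintro x (rfl | ⟨j, ⟨hj1, hjm⟩, rfl⟩)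
      · rw [← hV1]
        exact Submodule.subset_span ⟨e 1, Or.inr ⟨1, ⟨le_refl 1, hm1⟩, rfl⟩, rfl⟩
      · have h2j : 2 * j ≤ m := by
          have := (Nat.le_div_iff_mul_le (by norm_num : 0 < 2)).1 hjm; omega
        have hVe : V (e (2 * j)) = e j := by
          rw [hVeven (2*j) (by omega) (by omega) ⟨j, by ring⟩,
            Nat.mul_div_cancel_left j (by norm_num)]
        rw [← hVe]
        exact Submodule.subset_span ⟨e (2*j), Or.inr ⟨2*j, ⟨by omega, h2j⟩, rfl⟩, rfl⟩
  have hspanr : ∀ r ≤ Nat.log 2 n + 1, Submodule.span k ((⇑V)^[r] '' Set.univ)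
      = Submodule.span k (insert β (e '' Set.Icc 1 (n / 2 ^ r))) := by
    intro r hr
    induction r with
    | zero =>
      simp only [Function.iterate_zero, Set.image_id', pow_zero, Nat.div_one,
        Set.image_id, Submodule.span_univ]
      exact hspan.symm
    | succ r ih =>
      have hrL : r ≤ Nat.log 2 n := by omega
      have h2r : 2 ^ r ≤ n :=
        le_trans (Nat.pow_le_pow_right (by norm_num) hrL)
          (Nat.pow_log_le_self 2 (by omega))
      have h1 : 1 ≤ n / 2 ^ r := (Nat.one_le_div_iff (by positivity)).2 h2r
      rw [hiter, ih (by omega), hstep _ h1 (Nat.div_le_self _ _),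
        Nat.div_div_eq_div_mul, ← pow_succ]
  have hfin : ∀ m ≤ n,
      Module.finrank k (Submodule.span k (insert β (e '' Set.Icc 1 m))) = m + 1 := by
    intro m hm
    have hli : LinearIndependent k (fun i : Fin (m+1) => if i.val = 0 then β else e i.val) :=
      hind.comp (Fin.castLE (by omega)) (Fin.castLE_injective _)
    have hrange : (Set.range fun i : Fin (m+1) => if i.val = 0 then β else e i.val)
        = insert β (e '' Set.Icc 1 m) := by
      ext x
      constructor
      · rintro ⟨i, rfl⟩
        by_cases h : i.val = 0
        · simp [h]
        · exact Or.inr ⟨i.val, ⟨by omega, by omega⟩, by simp [h]⟩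
      · rintro (rfl | ⟨j, ⟨hj1, hjm⟩, rfl⟩)
        · exact ⟨0, by simp⟩
        · exact ⟨⟨j, by omega⟩, by simp [show j ≠ 0 by omega]⟩
    rw [← hrange, finrank_span_eq_card hli, Fintype.card_fin]
  have hbot : ∀ r, Nat.log 2 n + 2 ≤ r → Submodule.span k ((⇑V)^[r] '' Set.univ) = ⊥ := by
    intro r hr
    induction r with
    | zero => omega
    | succ r ih =>
      rcases Nat.lt_or_ge r (Nat.log 2 n + 2) with h | h
      · have hr' : r = Nat.log 2 n + 1 := by omega
        subst hr'
        rw [hiter, hspanr _ le_rfl]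
        have h0 : n / 2 ^ (Nat.log 2 n + 1) = 0 :=
          Nat.div_eq_of_lt (Nat.lt_pow_succ_log_self (by norm_num) n)
        rw [h0, show Set.Icc 1 0 = (∅ : Set ℕ) from Set.Icc_eq_empty (by omega),
          Set.image_empty, Submodule.map_span]
        simp [hVβ]
      · rw [hiter, ih h, Submodule.map_bot]
  refine ⟨fun r hr => ⟨hspanr r hr, ?_⟩, fun r hr => hbot r (by omega)⟩
  rw [hspanr r hr]
  exact hfin _ (Nat.div_le_self _ _)
end

section
/- Let k be a perfect field of characteristic p, σ the p-power Frobenius of k, and M a finite-dimensional k-vector space equipped with a σ-semilinear endomorphism F and a σ^{-1}-semilinear endomorphism V satisfying F∘V = V∘F = 0. Then M decomposes as a direct sum M = U ⊕ Z ⊕ L of subspaces stable under both F and V, such that V is bijective on U and F is zero on U, F is bijective on Z and V is zero on Z, and both F and V are nilpotent on L. -/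
namespace Stmt12Aux

variable {k : Type*} [Field k] {M : Type*} [AddCommGroup M] [Module k M]

section basic

variable (f : M → M) (e : k ≃+* k)

lemma f_zero (hsmul : ∀ (c : k) (x : M), f (c • x) = e c • f x) : f 0 = 0 := by
  have := hsmul (0 : k) 0
  simpa using this

lemma it_zero (hsmul : ∀ (c : k) (x : M), f (c • x) = e c • f x) (n : ℕ) :
    f^[n] 0 = 0 :=
  Function.iterate_fixed (f_zero f e hsmul) n

lemma it_add (hadd : ∀ x y : M, f (x + y) = f x + f y) (n : ℕ) (x y : M) :
    f^[n] (x + y) = f^[n] x + f^[n] y := by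
  induction n generalizing x y with
  | zero => simp
  | succ n ih => rw [Function.iterate_succ_apply, Function.iterate_succ_apply,
      Function.iterate_succ_apply, hadd, ih]

lemma f_sub (hadd : ∀ x y : M, f (x + y) = f x + f y)
    (hsmul : ∀ (c : k) (x : M), f (c • x) = e c • f x) (x y : M) :
    f (x - y) = f x - f y := by
  have hneg : f (-y) = -f y := by
    have := hsmul (-1 : k) y
    simpa using this
  rw [sub_eq_add_neg, hadd, hneg, sub_eq_add_neg]

lemma it_sub (hadd : ∀ x y : M, f (x + y) = f x + f y)
    (hsmul : ∀ (c : k) (x : M), f (c • x) = e c • f x) (n : ℕ) (x y : M) :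
    f^[n] (x - y) = f^[n] x - f^[n] y := by
  induction n generalizing x y with
  | zero => simp
  | succ n ih => rw [Function.iterate_succ_apply, Function.iterate_succ_apply,
      Function.iterate_succ_apply, f_sub f e hadd hsmul, ih]

lemma it_smul (hsmul : ∀ (c : k) (x : M), f (c • x) = e c • f x) (n : ℕ) (c : k) (x : M) :
    f^[n] (c • x) = (⇑e)^[n] c • f^[n] x := by
  induction n generalizing c x with
  | zero => simp
  | succ n ih => rw [Function.iterate_succ_apply, Function.iterate_succ_apply,
      Function.iterate_succ_apply, hsmul, ih]

/-- Kernel of the `n`-th iterate, as a submodule. -/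
def kerS (hadd : ∀ x y : M, f (x + y) = f x + f y)
    (hsmul : ∀ (c : k) (x : M), f (c • x) = e c • f x) (n : ℕ) : Submodule k M where
  carrier := {x | f^[n] x = 0}
  add_mem' := by
    intro a b ha hb
    simp only [Set.mem_setOf_eq] at *
    rw [it_add f hadd, ha, hb, add_zero]
  zero_mem' := it_zero f e hsmul n
  smul_mem' := by
    intro c x hx
    simp only [Set.mem_setOf_eq] at *
    rw [it_smul f e hsmul, hx, smul_zero]

/-- Range of the `n`-th iterate, as a submodule. -/
def imS (hadd : ∀ x y : M, f (x + y) = f x + f y)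
    (hsmul : ∀ (c : k) (x : M), f (c • x) = e c • f x) (n : ℕ) : Submodule k M where
  carrier := Set.range f^[n]
  add_mem' := by
    rintro a b ⟨x, rfl⟩ ⟨y, rfl⟩
    exact ⟨x + y, it_add f hadd n x y⟩
  zero_mem' := ⟨0, it_zero f e hsmul n⟩
  smul_mem' := by
    rintro c x ⟨y, rfl⟩
    refine ⟨(⇑e.symm)^[n] c • y, ?_⟩
    rw [it_smul f e hsmul]
    congr 1
    exact (Function.LeftInverse.iterate e.apply_symm_apply n) c

lemma mem_kerS {hadd : ∀ x y : M, f (x + y) = f x + f y}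
    {hsmul : ∀ (c : k) (x : M), f (c • x) = e c • f x} {n : ℕ} {x : M} :
    x ∈ kerS f e hadd hsmul n ↔ f^[n] x = 0 := Iff.rfl

lemma mem_imS {hadd : ∀ x y : M, f (x + y) = f x + f y}
    {hsmul : ∀ (c : k) (x : M), f (c • x) = e c • f x} {n : ℕ} {x : M} :
    x ∈ imS f e hadd hsmul n ↔ ∃ y, f^[n] y = x := Iff.rfl

lemma kerS_mono (hadd : ∀ x y : M, f (x + y) = f x + f y)
    (hsmul : ∀ (c : k) (x : M), f (c • x) = e c • f x) :
    Monotone (kerS f e hadd hsmul) := by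
  intro n m hnm x hx
  obtain ⟨d, rfl⟩ := Nat.exists_eq_add_of_le hnm
  rw [mem_kerS] at *
  rw [add_comm, Function.iterate_add_apply, hx, it_zero f e hsmul]

lemma imS_anti (hadd : ∀ x y : M, f (x + y) = f x + f y)
    (hsmul : ∀ (c : k) (x : M), f (c • x) = e c • f x) :
    Antitone (imS f e hadd hsmul) := by
  intro n m hnm x hx
  obtain ⟨d, rfl⟩ := Nat.exists_eq_add_of_le hnm
  rw [mem_imS] at *
  obtain ⟨y, rfl⟩ := hx
  exact ⟨f^[d] y, (Function.iterate_add_apply f n d y).symm⟩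

end basic

/-- Fitting decomposition for a semilinear endomorphism. -/
lemma fitting [FiniteDimensional k M] (f : M → M) (e : k ≃+* k)
    (hadd : ∀ x y : M, f (x + y) = f x + f y)
    (hsmul : ∀ (c : k) (x : M), f (c • x) = e c • f x) :
    ∃ N : ℕ, ∃ A B : Submodule k M,
      (∀ x : M, ∃ a ∈ A, ∃ b ∈ B, x = a + b) ∧
      (∀ x : M, x ∈ A → x ∈ B → x = 0) ∧
      (∀ x ∈ A, f x ∈ A) ∧
      (∀ x ∈ B, f x ∈ B) ∧
      Set.BijOn f A A ∧
      (∀ x : M, f x = 0 → x ∈ B) ∧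
      (∀ m : ℕ, N ≤ m → ∀ x ∈ B, f^[m] x = 0) := by
  obtain ⟨n₁, h₁⟩ := monotone_stabilizes_iff_noetherian.mpr inferInstance
    ⟨kerS f e hadd hsmul, kerS_mono f e hadd hsmul⟩
  obtain ⟨n₂, h₂⟩ := IsArtinian.monotone_stabilizes
    (⟨fun n => OrderDual.toDual (imS f e hadd hsmul n),
      fun _ _ h => imS_anti f e hadd hsmul h⟩ : ℕ →o (Submodule k M)ᵒᵈ)
  set N := n₁ + n₂ + 1 with hN
  have hker : ∀ m, N ≤ m → kerS f e hadd hsmul m = kerS f e hadd hsmul N := by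
    intro m hm
    have e1 := h₁ m (le_trans (by omega) hm)
    have e2 := h₁ N (by omega)
    simp only [OrderHom.coe_mk] at e1 e2
    rw [← e1, ← e2]
  have him : ∀ m, N ≤ m → imS f e hadd hsmul m = imS f e hadd hsmul N := by
    intro m hm
    have e1 := h₂ m (le_trans (by omega) hm)
    have e2 := h₂ N (by omega)
    exact congrArg OrderDual.ofDual (e1.symm.trans e2)
  have hkerf : ∀ x : M, f x = 0 → x ∈ kerS f e hadd hsmul N := by
    intro x hx
    rw [mem_kerS]
    obtain ⟨N', hN'⟩ : ∃ N', N = N' + 1 := ⟨n₁ + n₂, rfl⟩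
    rw [hN', Function.iterate_succ_apply, hx, it_zero f e hsmul]
  have hdisj : ∀ x : M, x ∈ imS f e hadd hsmul N → x ∈ kerS f e hadd hsmul N → x = 0 := by
    rintro x ⟨y, rfl⟩ hx
    rw [mem_kerS, ← Function.iterate_add_apply] at hx
    have : y ∈ kerS f e hadd hsmul (N + N) := hx
    rw [hker (N + N) (by omega)] at this
    exact this
  have hAstab : ∀ x ∈ imS f e hadd hsmul N, f x ∈ imS f e hadd hsmul N := by
    rintro x ⟨y, rfl⟩
    have : f (f^[N] y) ∈ imS f e hadd hsmul (N + 1) :=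
      ⟨y, Function.iterate_succ_apply' f N y⟩
    rwa [him (N + 1) (by omega)] at this
  refine ⟨N, imS f e hadd hsmul N, kerS f e hadd hsmul N, ?_, hdisj, hAstab, ?_, ?_, hkerf, ?_⟩
  · -- spanning
    intro x
    have hx : f^[N] x ∈ imS f e hadd hsmul (N + N) := by
      rw [him (N + N) (by omega)]
      exact ⟨x, rfl⟩
    obtain ⟨y, hy⟩ := hx
    refine ⟨f^[N] y, ⟨y, rfl⟩, x - f^[N] y, ?_, by abel⟩
    rw [mem_kerS, it_sub f e hadd hsmul, ← Function.iterate_add_apply, hy, sub_self]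
  · -- B stable
    intro x hx
    rw [mem_kerS] at *
    rw [← Function.iterate_succ_apply, Function.iterate_succ_apply', hx,
      f_zero f e hsmul]
  · -- BijOn
    refine ⟨hAstab, ?_, ?_⟩
    · intro x hx y hy hxy
      have hsub : f (x - y) = 0 := by
        rw [f_sub f e hadd hsmul, hxy, sub_self]
      have h0 : x - y = 0 :=
        hdisj _ (sub_mem hx hy) (hkerf _ hsub)
      exact sub_eq_zero.mp h0
    · rintro x ⟨y, rfl⟩
      have : f^[N] y ∈ imS f e hadd hsmul (N + 1) := by
        rw [him (N + 1) (by omega)]; exact ⟨y, rfl⟩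
      obtain ⟨z, hz⟩ := this
      exact ⟨f^[N] z, ⟨z, rfl⟩, (Function.iterate_succ_apply' f N z).symm.trans hz⟩
  · -- eventual kill
    intro m hm x hx
    obtain ⟨d, rfl⟩ := Nat.exists_eq_add_of_le hm
    rw [mem_kerS] at hx
    rw [add_comm, Function.iterate_add_apply, hx, it_zero f e hsmul]

end Stmt12Aux

theorem stmt12 (p : ℕ) [Fact p.Prime] (k : Type*) [Field k] [ExpChar k p] [PerfectRing k p]
    (M : Type*) [AddCommGroup M] [Module k M] [FiniteDimensional k M]
    (F : M →ₛₗ[frobenius k p] M)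
    (V : M →ₛₗ[((frobeniusEquiv k p).symm : k →+* k)] M)
    (hFV : ∀ x, F (V x) = 0) (hVF : ∀ x, V (F x) = 0) :
    ∃ U Z L : Submodule k M,
      (∀ x : M, ∃ u ∈ U, ∃ z ∈ Z, ∃ l ∈ L, x = u + z + l) ∧
      (∀ u ∈ U, ∀ z ∈ Z, ∀ l ∈ L, u + z + l = 0 → u = 0 ∧ z = 0 ∧ l = 0) ∧
      (∀ x ∈ U, F x ∈ U ∧ V x ∈ U) ∧
      (∀ x ∈ Z, F x ∈ Z ∧ V x ∈ Z) ∧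
      (∀ x ∈ L, F x ∈ L ∧ V x ∈ L) ∧
      Set.BijOn ⇑V ↑U ↑U ∧ (∀ x ∈ U, F x = 0) ∧
      Set.BijOn ⇑F ↑Z ↑Z ∧ (∀ x ∈ Z, V x = 0) ∧
      (∃ N : ℕ, ∀ x ∈ L, (⇑F)^[N] x = 0 ∧ (⇑V)^[N] x = 0) := by
  have hFadd : ∀ x y : M, F (x + y) = F x + F y := map_add F
  have hVadd : ∀ x y : M, V (x + y) = V x + V y := map_add V
  have hFsmul : ∀ (c : k) (x : M), F (c • x) = (frobeniusEquiv k p) c • F x := fun c x =>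
    F.map_smulₛₗ c x
  have hVsmul : ∀ (c : k) (x : M), V (c • x) = (frobeniusEquiv k p).symm c • V x := fun c x =>
    V.map_smulₛₗ c x
  obtain ⟨NF, ZF, BF, hF1, hF2, hF3, hF4, hF5, hF6, hF7⟩ :=
    Stmt12Aux.fitting (⇑F) (frobeniusEquiv k p) hFadd hFsmul
  obtain ⟨NV, UV, BV, hV1, hV2, hV3, hV4, hV5, hV6, hV7⟩ :=
    Stmt12Aux.fitting (⇑V) (frobeniusEquiv k p).symm hVadd hVsmul
  have hVZ : ∀ x ∈ ZF, V x = 0 := by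
    intro x hx
    obtain ⟨y, -, rfl⟩ := hF5.2.2 hx
    exact hVF y
  have hFU : ∀ x ∈ UV, F x = 0 := by
    intro x hx
    obtain ⟨y, -, rfl⟩ := hV5.2.2 hx
    exact hFV y
  have hZBV : ∀ x ∈ ZF, x ∈ BV := fun x hx => hV6 x (hVZ x hx)
  refine ⟨UV, ZF, BF ⊓ BV, ?_, ?_, ?_, ?_, ?_, hV5, hFU, hF5, hVZ, ?_⟩
  · -- spanning
    intro x
    obtain ⟨u, hu, a, ha, rfl⟩ := hV1 x
    obtain ⟨z, hz, l, hl, rfl⟩ := hF1 a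
    refine ⟨u, hu, z, hz, l, ⟨hl, ?_⟩, (add_assoc u z l).symm⟩
    have hlz : l = (z + l) - z := by abel
    rw [hlz]
    exact sub_mem ha (hZBV z hz)
  · -- independence
    intro u hu z hz l hl h0
    have hzBV : z ∈ BV := hZBV z hz
    have hu0 : u = 0 := by
      have h0' : u + (z + l) = 0 := by rw [← add_assoc]; exact h0
      have hune : u = -(z + l) := eq_neg_of_add_eq_zero_left h0'
      have huBV : u ∈ BV := by
        rw [hune]
        exact neg_mem (add_mem hzBV hl.2)
      exact hV2 u hu huBV
    have hzl : z + l = 0 := by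
      have h0' : u + (z + l) = 0 := by rw [← add_assoc]; exact h0
      rw [hu0, zero_add] at h0'
      exact h0'
    have hz0 : z = 0 := by
      have hzne : z = -l := eq_neg_of_add_eq_zero_left hzl
      have hzBF : z ∈ BF := by rw [hzne]; exact neg_mem hl.1
      exact hF2 z hz hzBF
    have hl0 : l = 0 := by rw [hz0, zero_add] at hzl; exact hzl
    exact ⟨hu0, hz0, hl0⟩
  · -- U stable
    intro x hx
    exact ⟨by rw [hFU x hx]; exact zero_mem _, hV3 x hx⟩
  · -- Z stable
    intro x hx
    exact ⟨hF3 x hx, by rw [hVZ x hx]; exact zero_mem _⟩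
  · -- L stable
    intro x hx
    exact ⟨⟨hF4 x hx.1, hV6 _ (hVF x)⟩, ⟨hF6 _ (hFV x), hV4 x hx.2⟩⟩
  · -- nilpotency
    exact ⟨max NF NV, fun x hx =>
      ⟨hF7 _ (le_max_left _ _) x hx.1, hV7 _ (le_max_right _ _) x hx.2⟩⟩
end
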